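/- Let a : ℝ^d → ℝ be a nonnegative C² function whose second derivative is bounded, with M := sup_{x∈ℝ^d} ‖a''(x)‖ < ∞ (operator norm of the Hessian). Then for every x ∈ ℝ^d, |∇a(x)|² ≤ 2 M a(x). -/

import Mathlib

open InnerProductSpace

lemma aux_grad_sq (d : ℕ) (a : EuclideanSpace ℝ (Fin d) → ℝ)
    (ha : ContDiff ℝ 2 a) (hpos : ∀ x, 0 ≤ a x) (M : ℝ) (hMpos : 0 < M)
    (hM : ∀ x, ‖fderiv ℝ (fderiv ℝ a) x‖ ≤ M) :
    ∀ x, ‖gradient a x‖ ^ 2 ≤ 2 * M * a x := by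
  intro x
  set v : EuclideanSpace ℝ (Fin d) := gradient a x with hv
  set w : EuclideanSpace ℝ (Fin d) := -v with hw
  have hda : Differentiable ℝ a := ha.differentiable (by norm_num)
  have hda' : Differentiable ℝ (fderiv ℝ a) :=
    (ha.fderiv_right (m := 1) (by norm_num)).differentiable (by norm_num)
  -- curve
  have hc : ∀ t : ℝ, HasDerivAt (fun t : ℝ => x + t • w) w t := by
    intro t
    simpa using ((hasDerivAt_id t).smul_const w).const_add x
  set g : ℝ → ℝ := fun t => a (x + t • w) with hg
  set g' : ℝ → ℝ := fun t => (fderiv ℝ a (x + t • w)) w with hg'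
  set g'' : ℝ → ℝ := fun t => ((fderiv ℝ (fderiv ℝ a) (x + t • w)) w) w with hg''
  have hgd : ∀ t, HasDerivAt g (g' t) t := by
    intro t
    exact ((hda _).hasFDerivAt).comp_hasDerivAt t (hc t)
  have hgd' : ∀ t, HasDerivAt g' (g'' t) t := by
    intro t
    have h1 : HasFDerivAt (fun u => (fderiv ℝ a u) w)
        (((ContinuousLinearMap.apply ℝ ℝ w)).comp (fderiv ℝ (fderiv ℝ a) (x + t • w)))
        (x + t • w) :=
      (ContinuousLinearMap.apply ℝ ℝ w).hasFDerivAt.comp _ ((hda' _).hasFDerivAt)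
    exact h1.comp_hasDerivAt t (hc t)
  have hg''le : ∀ t, g'' t ≤ M * ‖v‖ ^ 2 := by
    intro t
    calc g'' t ≤ |g'' t| := le_abs_self _
    _ ≤ ‖fderiv ℝ (fderiv ℝ a) (x + t • w)‖ * ‖w‖ * ‖w‖ := by
        have := ((fderiv ℝ (fderiv ℝ a) (x + t • w)).le_opNorm w)
        have h2 := ((fderiv ℝ (fderiv ℝ a) (x + t • w)) w).le_opNorm w
        calc |g'' t| ≤ ‖(fderiv ℝ (fderiv ℝ a) (x + t • w)) w‖ * ‖w‖ := h2
        _ ≤ ‖fderiv ℝ (fderiv ℝ a) (x + t • w)‖ * ‖w‖ * ‖w‖ := by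
            gcongr
    _ ≤ M * ‖v‖ ^ 2 := by
        rw [hw, norm_neg]
        have := hM (x + t • w)
        nlinarith [norm_nonneg v]
  -- φ
  set φ : ℝ → ℝ := fun t => a x + t * g' 0 + M * ‖v‖ ^ 2 * t ^ 2 / 2 - g t with hφ
  set φ' : ℝ → ℝ := fun t => g' 0 + M * ‖v‖ ^ 2 * t - g' t with hφ'
  have hφd : ∀ t, HasDerivAt φ (φ' t) t := by
    intro t
    have : HasDerivAt (fun t : ℝ => a x + t * g' 0 + M * ‖v‖ ^ 2 * t ^ 2 / 2)
        (g' 0 + M * ‖v‖ ^ 2 * t) t := by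
      have h1 : HasDerivAt (fun t : ℝ => t * g' 0) (g' 0) t := by
        simpa using (hasDerivAt_id t).mul_const (g' 0)
      have h2 : HasDerivAt (fun t : ℝ => M * ‖v‖ ^ 2 * t ^ 2 / 2)
          (M * ‖v‖ ^ 2 * t) t := by
        have := ((hasDerivAt_pow 2 t).const_mul (M * ‖v‖ ^ 2)).div_const 2
        refine this.congr_deriv ?_
        ring
      exact (h1.const_add (a x)).add h2
    exact this.sub (hgd t)
  have hφ'd : ∀ t, HasDerivAt φ' (M * ‖v‖ ^ 2 - g'' t) t := by
    intro t
    have h2 : HasDerivAt (fun t : ℝ => g' 0 + M * ‖v‖ ^ 2 * t) (M * ‖v‖ ^ 2) t := by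
      simpa using ((hasDerivAt_id t).const_mul (M * ‖v‖ ^ 2)).const_add (g' 0)
    exact h2.sub (hgd' t)
  have hφ'mono : Monotone φ' := by
    apply monotone_of_deriv_nonneg (fun t => (hφ'd t).differentiableAt)
    intro t
    rw [(hφ'd t).deriv]
    linarith [hg''le t]
  have hφ'0 : φ' 0 = 0 := by simp [hφ']
  have hφ'nonneg : ∀ t, 0 ≤ t → 0 ≤ φ' t := by
    intro t ht
    rw [← hφ'0]
    exact hφ'mono ht
  have hφmono : MonotoneOn φ (Set.Ici (0 : ℝ)) := by
    apply monotoneOn_of_deriv_nonneg (convex_Ici 0)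
      (fun t _ => (hφd t).continuousAt.continuousWithinAt)
      (fun t _ => (hφd t).differentiableAt.differentiableWithinAt)
    intro t ht
    rw [(hφd t).deriv]
    exact hφ'nonneg t (le_of_lt (by simpa using ht))
  have hφ0 : φ 0 = 0 := by simp [hφ, hg]
  have key : 0 ≤ φ (1 / M) := by
    rw [← hφ0]
    exact hφmono (by simp) (Set.mem_Ici.mpr (by positivity)) (by positivity)
  -- g' 0 = -‖v‖^2
  have hgrad : g' 0 = -‖v‖ ^ 2 := by
    have hG : HasFDerivAt a ((toDual ℝ (EuclideanSpace ℝ (Fin d))) v) x :=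
      hasGradientAt_iff_hasFDerivAt.mp ((hda x).hasGradientAt)
    have : fderiv ℝ a x = (toDual ℝ (EuclideanSpace ℝ (Fin d))) v := hG.fderiv
    simp only [hg', this, zero_smul, add_zero, toDual_apply_apply, hw, inner_neg_right]
    rw [real_inner_self_eq_norm_sq]
  have hgt : 0 ≤ g (1 / M) := hpos _
  have : 0 ≤ a x + (1 / M) * (-‖v‖ ^ 2) + M * ‖v‖ ^ 2 * (1 / M) ^ 2 / 2 := by
    have := key
    rw [hφ, hgrad] at this
    linarith
  have h2 : ‖v‖ ^ 2 / (2 * M) ≤ a x := by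
    have hM' : (1:ℝ) / M * ‖v‖ ^ 2 - M * ‖v‖ ^ 2 * (1 / M) ^ 2 / 2 = ‖v‖ ^ 2 / (2 * M) := by
      field_simp
      ring
    linarith [this]
  calc ‖v‖ ^ 2 = (‖v‖ ^ 2 / (2 * M)) * (2 * M) := by field_simp
  _ ≤ a x * (2 * M) := by gcongr
  _ = 2 * M * a x := by ring

theorem gradient_sq_le_of_nonneg (d : ℕ) (a : EuclideanSpace ℝ (Fin d) → ℝ)
    (ha : ContDiff ℝ 2 a) (hpos : ∀ x, 0 ≤ a x) (M : ℝ)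
    (hM : ∀ x, ‖fderiv ℝ (fderiv ℝ a) x‖ ≤ M) :
    ∀ x, ‖gradient a x‖ ^ 2 ≤ 2 * M * a x := by
  intro x
  apply le_of_forall_pos_le_add
  intro ε hε
  set δ : ℝ := ε / (2 * a x + 1) with hδ
  have haxn : 0 ≤ a x := hpos x
  have hδpos : 0 < δ := by positivity
  have hMδ : 0 < M + δ := by
    have : 0 ≤ M := le_trans (ContinuousLinearMap.opNorm_nonneg _) (hM x)
    linarith
  have := aux_grad_sq d a ha hpos (M + δ) hMδ (fun y => le_trans (hM y) (by linarith)) x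
  have h2 : 2 * a x * δ ≤ ε := by
    have hpos1 : (0:ℝ) < 2 * a x + 1 := by linarith
    rw [hδ, mul_div_assoc', div_le_iff₀ hpos1]
    nlinarith
  calc ‖gradient a x‖ ^ 2 ≤ 2 * (M + δ) * a x := this
  _ = 2 * M * a x + 2 * a x * δ := by ring
  _ ≤ 2 * M * a x + ε := by linarith
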